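/- (Achronal causal curves are null geodesics, Minkowski version.) Let n ≥ 1 and let γ : I → ℝ^{1+n} be a future-directed causal curve which is achronal, i.e. for no s, s' ∈ I does γ(s') lie in the timelike future I^+(γ(s)). Then the image of γ is contained in a single null ray: there exist x₀ ∈ ℝ^{1+n} and a null future-directed vector v such that γ(s) ∈ { x₀ + t·v : t ∈ ℝ } for every s ∈ I. -/

import Mathlib

open Set MeasureTheory Filter Topology
open scoped RealInnerProductSpace

noncomputable section

/-- Minkowski space-time `ℝ^{1+n} = ℝ × ℝ^n`. -/
abbrev Mink (n : ℕ) : Type := ℝ × EuclideanSpace ℝ (Fin n)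

/-- A vector is timelike future-directed if `v⁰ > |v⃗|`. -/
def timelikeFD {n : ℕ} (v : Mink n) : Prop := ‖v.2‖ < v.1

/-- A vector is causal future-directed if `v ≠ 0` and `v⁰ ≥ |v⃗|`. -/
def causalFD {n : ℕ} (v : Mink n) : Prop := v ≠ 0 ∧ ‖v.2‖ ≤ v.1

/-- A vector is null future-directed if `v ≠ 0` and `v⁰ = |v⃗|`. -/
def nullFD {n : ℕ} (v : Mink n) : Prop := v ≠ 0 ∧ ‖v.2‖ = v.1

/-- A vector is causal past-directed if `-v` is causal future-directed. -/
def causalPD {n : ℕ} (v : Mink n) : Prop := causalFD (-v)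

/-- The Minkowski bilinear form `η(x,y) = -x⁰y⁰ + ⟨x⃗,y⃗⟩`. -/
def minkBF {n : ℕ} (x y : Mink n) : ℝ := -(x.1 * y.1) + ⟪x.2, y.2⟫

/-- The Euclidean norm on `ℝ^{1+n}`. -/
def eNorm {n : ℕ} (v : Mink n) : ℝ := Real.sqrt (v.1 ^ 2 + ‖v.2‖ ^ 2)

/-- A future-directed causal curve defined on `S ⊆ ℝ`: locally Lipschitz, with
almost-everywhere derivative causal future-directed. -/
def IsCausalCurveOn {n : ℕ} (γ : ℝ → Mink n) (S : Set ℝ) : Prop :=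
  (∀ a b : ℝ, Icc a b ⊆ S → ∃ K : NNReal, LipschitzOnWith K γ (Icc a b)) ∧
  (∀ᵐ s ∂(volume.restrict S), ∃ v : Mink n, HasDerivWithinAt γ v S s ∧ causalFD v)

/-- A future-directed timelike curve defined on `S ⊆ ℝ`. -/
def IsTimelikeCurveOn {n : ℕ} (γ : ℝ → Mink n) (S : Set ℝ) : Prop :=
  (∀ a b : ℝ, Icc a b ⊆ S → ∃ K : NNReal, LipschitzOnWith K γ (Icc a b)) ∧
  (∀ᵐ s ∂(volume.restrict S), ∃ v : Mink n, HasDerivWithinAt γ v S s ∧ timelikeFD v)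

/-- A past-directed causal curve defined on `S ⊆ ℝ`. -/
def IsPastCausalCurveOn {n : ℕ} (γ : ℝ → Mink n) (S : Set ℝ) : Prop :=
  (∀ a b : ℝ, Icc a b ⊆ S → ∃ K : NNReal, LipschitzOnWith K γ (Icc a b)) ∧
  (∀ᵐ s ∂(volume.restrict S), ∃ v : Mink n, HasDerivWithinAt γ v S s ∧ causalPD v)

/-- `chron p q`: there is a future-directed timelike curve from `p` to `q`. -/
def chron {n : ℕ} (p q : Mink n) : Prop :=
  ∃ (a b : ℝ) (γ : ℝ → Mink n), a < b ∧ IsTimelikeCurveOn γ (Icc a b) ∧ γ a = p ∧ γ b = q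

/-- `caus p q`: `q = p`, or there is a future-directed causal curve from `p` to `q`. -/
def caus {n : ℕ} (p q : Mink n) : Prop :=
  p = q ∨ ∃ (a b : ℝ) (γ : ℝ → Mink n), a < b ∧ IsCausalCurveOn γ (Icc a b) ∧ γ a = p ∧ γ b = q

/-- `causPast p q`: `q = p`, or there is a past-directed causal curve from `p` to `q`. -/
def causPast {n : ℕ} (p q : Mink n) : Prop :=
  p = q ∨ ∃ (a b : ℝ) (γ : ℝ → Mink n), a < b ∧ IsPastCausalCurveOn γ (Icc a b) ∧ γ a = p ∧ γ b = q

/-- The timelike future `I⁺(U)`. -/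
def Iplus {n : ℕ} (U : Set (Mink n)) : Set (Mink n) := {q | ∃ p ∈ U, chron p q}

/-- The causal future `J⁺(U)`. -/
def Jplus {n : ℕ} (U : Set (Mink n)) : Set (Mink n) := {q | ∃ p ∈ U, caus p q}

/-- The causal past `J⁻(U)`. -/
def Jminus {n : ℕ} (U : Set (Mink n)) : Set (Mink n) := {q | ∃ p ∈ U, causPast p q}

/-- An inextendible future-directed timelike curve: defined on all of `ℝ`, locally
Lipschitz, parameterized by Euclidean arclength, with a.e. timelike future derivative. -/
def IsInextTimelike {n : ℕ} (γ : ℝ → Mink n) : Prop :=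
  LocallyLipschitz γ ∧
  ∀ᵐ s : ℝ, ∃ v : Mink n, HasDerivAt γ v s ∧ timelikeFD v ∧ eNorm v = 1



/-! ### Auxiliary lemmas -/

section Aux

lemma slope_seq_tendsto {f : ℝ → ℝ} {v x : ℝ} {s : Set ℝ} (hf : HasDerivWithinAt f v s x)
    (hmem : ∀ᶠ k : ℕ in atTop, x + 1/(k+1 : ℝ) ∈ s) :
    Tendsto (fun k : ℕ => (f (x + 1/(k+1:ℝ)) - f x) / (1/(k+1:ℝ))) atTop (𝓝 v) := by
  have h := hasDerivWithinAt_iff_tendsto_slope.1 hf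
  have hpos : ∀ k : ℕ, (0:ℝ) < 1/(k+1:ℝ) := fun k => by positivity
  have hseq : Tendsto (fun k : ℕ => x + 1/(k+1:ℝ)) atTop (𝓝[s \ {x}] x) := by
    rw [tendsto_nhdsWithin_iff]
    constructor
    · simpa using (tendsto_const_nhds (x := x)).add tendsto_one_div_add_atTop_nhds_zero_nat
    · filter_upwards [hmem] with k hk
      exact ⟨hk, by simp only [mem_singleton_iff]; exact ne_of_gt (lt_add_of_pos_right _ (hpos k))⟩
  have := h.comp hseq
  refine this.congr fun k => ?_
  simp [slope_def_field]

lemma lip_ae_deriv_nonneg_mono {g : ℝ → ℝ} {a b : ℝ} {K : NNReal}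
    (hab : a ≤ b) (hg : LipschitzOnWith K g (Icc a b))
    (hd : ∀ᵐ x ∂(volume.restrict (Icc a b)), ∃ v, HasDerivWithinAt g v (Icc a b) x ∧ 0 ≤ v) :
    g a ≤ g b := by
  rcases eq_or_lt_of_le hab with rfl | hab'
  · exact le_rfl
  obtain ⟨G, hG, hGeq⟩ := hg.extend_real
  have hdG : ∀ᵐ x ∂(volume.restrict (Icc a b)),
      ∃ v, HasDerivWithinAt G v (Icc a b) x ∧ 0 ≤ v := by
    filter_upwards [hd, ae_restrict_mem measurableSet_Icc] with x hx hxm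
    obtain ⟨v, hv, hv0⟩ := hx
    exact ⟨v, hv.congr (fun y hy => (hGeq hy).symm) (hGeq hxm).symm, hv0⟩
  classical
  set P : ℝ → Prop := fun x => ∃ v, HasDerivWithinAt G v (Icc a b) x ∧ 0 ≤ v with hP
  set q : ℝ → ℝ := fun x => if h : P x then h.choose else 0 with hqdef
  have hq : ∀ᵐ x ∂(volume.restrict (Icc a b)),
      HasDerivWithinAt G (q x) (Icc a b) x ∧ 0 ≤ q x := by
    filter_upwards [hdG] with x hx
    simp only [hqdef, dif_pos (show P x from hx)]
    exact (show P x from hx).choose_spec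
  set Q : ℕ → ℝ → ℝ := fun k x => (G (x + 1/(k+1:ℝ)) - G x) / (1/(k+1:ℝ)) with hQdef
  have hGc : Continuous G := hG.continuous
  have hQc : ∀ k, Continuous (Q k) := fun k =>
    ((hGc.comp (continuous_id.add continuous_const)).sub hGc).div_const _
  have hpos : ∀ k : ℕ, (0:ℝ) < 1/(k+1:ℝ) := fun k => by positivity
  have hbound : ∀ k x, |Q k x| ≤ (K:ℝ) := by
    intro k x
    have h1 := hpos k
    have h2 := hG.dist_le_mul (x + 1/(k+1:ℝ)) x
    rw [Real.dist_eq, Real.dist_eq, add_sub_cancel_left, abs_of_pos h1] at h2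
    rw [hQdef]
    simp only
    rw [abs_div, abs_of_pos h1, div_le_iff₀ h1]
    exact h2
  have hIoo : ∀ᵐ x ∂(volume.restrict (Icc a b)), x ∈ Ioo a b := by
    rw [← Measure.restrict_congr_set Ioo_ae_eq_Icc]
    exact ae_restrict_mem measurableSet_Ioo
  have hlim : ∀ᵐ x ∂(volume.restrict (Icc a b)),
      Tendsto (fun k => Q k x) atTop (𝓝 (q x)) := by
    filter_upwards [hq, hIoo] with x hx hxI
    refine slope_seq_tendsto hx.1 ?_
    have ht : Tendsto (fun k : ℕ => 1/(k+1:ℝ)) atTop (𝓝 0) :=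
      tendsto_one_div_add_atTop_nhds_zero_nat
    have hev : ∀ᶠ k : ℕ in atTop, 1/(k+1:ℝ) < b - x :=
      ht.eventually_lt_const (by linarith [hxI.2])
    filter_upwards [hev] with k hk
    exact ⟨by linarith [hxI.1, (hpos k)], by linarith⟩
  have hDCT := tendsto_integral_of_dominated_convergence (μ := volume.restrict (Icc a b))
    (F := Q) (f := q) (fun _ => (K:ℝ))
    (fun k => (hQc k).aestronglyMeasurable)
    (integrableOn_const (measure_Icc_lt_top).ne)
    (fun k => ae_of_all _ fun x => by simpa [Real.norm_eq_abs] using hbound k x)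
    hlim
  set F : ℝ → ℝ := fun u => ∫ t in a..u, G t with hFdef
  have hFd : ∀ x : ℝ, HasDerivAt F (G x) x := fun x =>
    (hGc.integral_hasStrictDerivAt a x).hasDerivAt
  have hIQ : ∀ k : ℕ, ∫ x in Icc a b, Q k x
      = ((F (b + 1/(k+1:ℝ)) - F b) / (1/(k+1:ℝ)) - (F (a + 1/(k+1:ℝ)) - F a) / (1/(k+1:ℝ))) := by
    intro k
    set h : ℝ := 1/(k+1:ℝ) with hh
    have hint1 : IntervalIntegrable (fun x => G (x + h)) volume a b :=
      (hGc.comp (continuous_id.add continuous_const)).intervalIntegrable a b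
    have hint2 : IntervalIntegrable G volume a b := hGc.intervalIntegrable a b
    have e1 : ∫ x in Icc a b, Q k x = ∫ x in a..b, Q k x := by
      rw [intervalIntegral.integral_of_le hab, integral_Icc_eq_integral_Ioc]
    rw [e1]
    have e2 : ∫ x in a..b, Q k x = (∫ x in a..b, (G (x + h) - G x)) / h := by
      rw [← intervalIntegral.integral_div]
    rw [e2, intervalIntegral.integral_sub hint1 hint2]
    have e3 : ∫ x in a..b, G (x + h) = ∫ x in (a+h)..(b+h), G x :=
      intervalIntegral.integral_comp_add_right (fun x => G x) h
    have e4 : ∫ x in (a+h)..(b+h), G x = F (b+h) - F (a+h) := by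
      rw [hFdef]
      simp only
      rw [intervalIntegral.integral_interval_sub_left]
      · exact (hGc.intervalIntegrable a (b+h))
      · exact (hGc.intervalIntegrable a (a+h))
    have e5 : (∫ x in a..b, G x) = F b := rfl
    rw [e3, e4, e5]
    have e6 : F a = 0 := intervalIntegral.integral_same
    rw [e6]
    ring
  have hlim2 : Tendsto (fun k => ∫ x in Icc a b, Q k x) atTop (𝓝 (G b - G a)) := by
    simp_rw [hIQ]
    have h1 := slope_seq_tendsto (s := univ) (f := F) (hFd b).hasDerivWithinAt
      (Eventually.of_forall fun _ => mem_univ _)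
    have h2 := slope_seq_tendsto (s := univ) (f := F) (hFd a).hasDerivWithinAt
      (Eventually.of_forall fun _ => mem_univ _)
    exact h1.sub h2
  have hkey : ∫ x in Icc a b, q x = G b - G a := tendsto_nhds_unique hDCT hlim2
  have hnn : 0 ≤ G b - G a := by
    rw [← hkey]
    refine integral_nonneg_of_ae ?_
    filter_upwards [hq] with x hx using hx.2
  have ha' : g a = G a := hGeq ⟨le_rfl, hab⟩
  have hb' : g b = G b := hGeq ⟨hab, le_rfl⟩
  rw [ha', hb']
  linarith

lemma chron_of_timelike_sub {n : ℕ} (p q : Mink n) (h : timelikeFD (q - p)) : chron p q := by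
  set v : Mink n := q - p with hv
  refine ⟨0, 1, fun s => p + s • v, one_pos, ⟨?_, ?_⟩, by simp, by simp [hv]⟩
  · intro a b _
    refine ⟨‖v‖₊, LipschitzWith.lipschitzOnWith (LipschitzWith.of_dist_le_mul fun x y => ?_)⟩
    rw [dist_eq_norm, Real.dist_eq]
    have : p + x • v - (p + y • v) = (x - y) • v := by module
    rw [this, norm_smul, Real.norm_eq_abs]
    simp [mul_comm]
  · refine ae_of_all _ fun s => ⟨v, ?_, h⟩
    have h1 : HasDerivAt (fun y : ℝ => y • v) ((1:ℝ) • v) s := (hasDerivAt_id s).smul_const v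
    rw [one_smul] at h1
    exact (h1.const_add p).hasDerivWithinAt

lemma incr_inner_le {n : ℕ} {I : Set ℝ} {γ : ℝ → Mink n} (hγ : IsCausalCurveOn γ I)
    {a b : ℝ} (hab : a ≤ b) (hIab : Icc a b ⊆ I)
    (u : EuclideanSpace ℝ (Fin n)) (hu : ‖u‖ ≤ 1) :
    ⟪u, (γ b).2 - (γ a).2⟫ ≤ (γ b).1 - (γ a).1 := by
  obtain ⟨K, hK⟩ := hγ.1 a b hIab
  set L : Mink n →L[ℝ] ℝ :=
    ContinuousLinearMap.fst ℝ ℝ (EuclideanSpace ℝ (Fin n)) -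
      (innerSL ℝ u).comp (ContinuousLinearMap.snd ℝ ℝ (EuclideanSpace ℝ (Fin n))) with hL
  have hLval : ∀ x : Mink n, L x = x.1 - ⟪u, x.2⟫ := fun x => by
    simp [hL, ContinuousLinearMap.sub_apply]
  have hlip : LipschitzOnWith (‖L‖₊ * K) (fun s => L (γ s)) (Icc a b) :=
    L.lipschitz.comp_lipschitzOnWith hK
  have hd : ∀ᵐ x ∂(volume.restrict (Icc a b)),
      ∃ v, HasDerivWithinAt (fun s => L (γ s)) v (Icc a b) x ∧ 0 ≤ v := by
    have h2 : ∀ᵐ x ∂(volume.restrict (Icc a b)),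
        ∃ v : Mink n, HasDerivWithinAt γ v I x ∧ causalFD v :=
      ae_mono (Measure.restrict_mono hIab le_rfl) hγ.2
    filter_upwards [h2] with x hx
    obtain ⟨v, hv, hvc⟩ := hx
    refine ⟨L v, L.hasFDerivAt.comp_hasDerivWithinAt x (hv.mono hIab), ?_⟩
    rw [hLval]
    have h3 : ⟪u, v.2⟫ ≤ ‖u‖ * ‖v.2‖ := real_inner_le_norm u v.2
    have h4 : ‖u‖ * ‖v.2‖ ≤ ‖v.2‖ := mul_le_of_le_one_left (norm_nonneg _) hu
    have h5 := hvc.2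
    linarith
  have := lip_ae_deriv_nonneg_mono hab hlip hd
  rw [hLval, hLval] at this
  rw [inner_sub_right]
  linarith

lemma incr_nz_le {n : ℕ} {I : Set ℝ} (hI : I.OrdConnected) {γ : ℝ → Mink n}
    (hγ : IsCausalCurveOn γ I) {a b : ℝ} (ha : a ∈ I) (hb : b ∈ I) (hab : a ≤ b) :
    ‖(γ b - γ a).2‖ ≤ (γ b - γ a).1 := by
  have hIab : Icc a b ⊆ I := hI.out ha hb
  have key := incr_inner_le hγ hab hIab
  set w : EuclideanSpace ℝ (Fin n) := (γ b).2 - (γ a).2 with hw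
  have hfst : (γ b - γ a).1 = (γ b).1 - (γ a).1 := rfl
  have hsnd : (γ b - γ a).2 = w := rfl
  rw [hfst, hsnd]
  rcases eq_or_ne w 0 with h0 | h0
  · rw [h0, norm_zero]
    have := key 0 (by simp)
    simpa using this
  · have hnorm : ‖(‖w‖⁻¹ • w : EuclideanSpace ℝ (Fin n))‖ = 1 := by
      rw [norm_smul, norm_inv, norm_norm, inv_mul_cancel₀ (norm_ne_zero_iff.2 h0)]
    have := key (‖w‖⁻¹ • w) (le_of_eq hnorm)
    rw [real_inner_smul_left, real_inner_self_eq_norm_sq] at this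
    have hw0 : (0:ℝ) < ‖w‖ := norm_pos_iff.2 h0
    calc ‖w‖ = ‖w‖⁻¹ * ‖w‖^2 := by field_simp
    _ ≤ _ := this

/-- "Null or zero, future-directed". -/
def NZfut {n : ℕ} (p : Mink n) : Prop := ‖p.2‖ = p.1

lemma NZfut.zero {n : ℕ} : NZfut (0 : Mink n) := by simp [NZfut]

lemma NZfut.fst_nonneg {n : ℕ} {p : Mink n} (h : NZfut p) : 0 ≤ p.1 := h ▸ norm_nonneg _

lemma geom1 {n : ℕ} {p q : Mink n} (hp : NZfut p) (hq : NZfut q) (hpq : NZfut (p + q)) :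
    SameRay ℝ p q := by
  have h2 : ‖p.2 + q.2‖ = ‖p.2‖ + ‖q.2‖ := by
    have : ‖(p+q).2‖ = (p+q).1 := hpq
    rw [Prod.snd_add, Prod.fst_add] at this
    rw [this, hp, hq]
  have hray : SameRay ℝ p.2 q.2 := sameRay_iff_norm_add.mpr h2
  obtain ⟨u, c, d, hc, hd, -, hpu, hqu⟩ := hray.exists_eq_smul
  set w : Mink n := (‖u‖, u) with hwdef
  have hp' : p = c • w := by
    refine Prod.ext ?_ ?_
    · show p.1 = c • ‖u‖
      rw [← hp, hpu, norm_smul, Real.norm_eq_abs, abs_of_nonneg hc, smul_eq_mul]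
    · exact hpu
  have hq' : q = d • w := by
    refine Prod.ext ?_ ?_
    · show q.1 = d • ‖u‖
      rw [← hq, hqu, norm_smul, Real.norm_eq_abs, abs_of_nonneg hd, smul_eq_mul]
    · exact hqu
  rw [hp', hq']
  rcases eq_or_lt_of_le hc with rfl | hcpos
  · rw [zero_smul]; exact SameRay.zero_left _
  · have : d • w = (d/c) • (c • w) := by
      rw [smul_smul, div_mul_cancel₀ _ (ne_of_gt hcpos)]
    rw [this]
    exact SameRay.sameRay_nonneg_smul_right _ (div_nonneg hd hc)

lemma geom3 {n : ℕ} {p q r : Mink n} (hp : NZfut p) (hq : NZfut q) (hr : NZfut r)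
    (h0 : p + q + r = 0) : q = 0 := by
  have h1 : p.1 + q.1 + r.1 = 0 := by
    have := congrArg Prod.fst h0
    simpa [Prod.fst_add] using this
  have hq1 : q.1 = 0 := by
    have := hp.fst_nonneg; have := hq.fst_nonneg; have := hr.fst_nonneg
    linarith
  have hq2 : q.2 = 0 := by
    have : ‖q.2‖ = 0 := by rw [hq, hq1]
    exact norm_eq_zero.1 this
  exact Prod.ext hq1 hq2

lemma sameRay_nested {n : ℕ} {I : Set ℝ} {γ : ℝ → Mink n}
    (HNZ : ∀ a ∈ I, ∀ b ∈ I, a ≤ b → NZfut (γ b - γ a))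
    {m a b M : ℝ} (hm : m ∈ I) (ha : a ∈ I) (hb : b ∈ I) (hM : M ∈ I)
    (h1 : m ≤ a) (h2 : a ≤ b) (h3 : b ≤ M) :
    SameRay ℝ (γ b - γ a) (γ M - γ m) := by
  set p : Mink n := γ a - γ m with hpdef
  set q : Mink n := γ b - γ a with hqdef
  set r : Mink n := γ M - γ b with hrdef
  have hp : NZfut p := HNZ m hm a ha h1
  have hq : NZfut q := HNZ a ha b hb h2
  have hr : NZfut r := HNZ b hb M hM h3
  have epq : p + q = γ b - γ m := by rw [hpdef, hqdef]; abel
  have epqr : p + q + r = γ M - γ m := by rw [hpdef, hqdef, hrdef]; abel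
  have hpq : NZfut (p + q) := by rw [epq]; exact HNZ m hm b hb (h1.trans h2)
  have hpqr : NZfut (p + q + r) := by rw [epqr]; exact HNZ m hm M hM ((h1.trans h2).trans h3)
  by_cases h0 : p + q = 0
  · have hq0 : q = 0 := geom3 hp hq NZfut.zero (by rw [add_zero]; exact h0)
    rw [hq0]
    exact SameRay.zero_left _
  · have h1' : SameRay ℝ q p := geom1 hq hp (by rwa [add_comm q p])
    have h2' : SameRay ℝ q (p + q) := h1'.add_right SameRay.rfl
    have h3' : SameRay ℝ (p + q) r := geom1 hpq hr hpqr
    have h4' : SameRay ℝ q r := h2'.trans h3' (fun h => absurd h h0)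
    have h5' : SameRay ℝ q (p + q + r) := h2'.add_right h4'
    rw [← epqr]
    exact h5'

end Aux

/-- achronal causal curves are null geodesics, Minkowski version: an
achronal future-directed causal curve has image contained in a single null ray. -/
theorem achronal_causal_curve_is_null_ray (n : ℕ) (hn : 1 ≤ n)
    (I : Set ℝ) (hI : I.OrdConnected)
    (γ : ℝ → Mink n) (hγ : IsCausalCurveOn γ I)
    (hach : ∀ s ∈ I, ∀ s' ∈ I, ¬ chron (γ s) (γ s')) :
    ∃ (x₀ v : Mink n), nullFD v ∧ ∀ s ∈ I, ∃ t : ℝ, γ s = x₀ + t • v := by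
  classical
  -- step 1: all increments along the curve are null or zero
  have HNZ : ∀ a ∈ I, ∀ b ∈ I, a ≤ b → NZfut (γ b - γ a) := by
    intro a ha b hb hab
    have hle := incr_nz_le hI hγ ha hb hab
    by_contra hne
    have htl : timelikeFD (γ b - γ a) := lt_of_le_of_ne hle hne
    have : chron (γ a) (γ b) := by
      have h' : timelikeFD (γ b - γ a) := htl
      exact chron_of_timelike_sub _ _ (by simpa using h')
    exact hach a ha b hb this
  -- trivial cases
  rcases I.eq_empty_or_nonempty with rfl | ⟨s₀, hs₀⟩
  · exact ⟨0, (1, EuclideanSpace.single ⟨0, hn⟩ (1:ℝ)), 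
      ⟨by simp [Prod.ext_iff], by simp [EuclideanSpace.norm_single]⟩,
      fun s hs => absurd hs (notMem_empty s)⟩
  by_cases hconst : ∀ s ∈ I, γ s = γ s₀
  · refine ⟨γ s₀, (1, EuclideanSpace.single ⟨0, hn⟩ (1:ℝ)),
      ⟨by simp [Prod.ext_iff], by simp [EuclideanSpace.norm_single]⟩,
      fun s hs => ⟨0, by rw [hconst s hs]; simp⟩⟩
  push_neg at hconst
  obtain ⟨s₁, hs₁, hne⟩ := hconst
  set m₁ : ℝ := min s₀ s₁ with hm₁def
  set M₁ : ℝ := max s₀ s₁ with hM₁def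
  have hm₁ : m₁ ∈ I := by
    rcases le_total s₀ s₁ with h | h
    · rw [hm₁def, min_eq_left h]; exact hs₀
    · rw [hm₁def, min_eq_right h]; exact hs₁
  have hM₁ : M₁ ∈ I := by
    rcases le_total s₀ s₁ with h | h
    · rw [hM₁def, max_eq_right h]; exact hs₁
    · rw [hM₁def, max_eq_left h]; exact hs₀
  set v : Mink n := γ M₁ - γ m₁ with hvdef
  have hvne : v ≠ 0 := by
    rw [hvdef]
    rcases le_total s₀ s₁ with h | h
    · rw [hM₁def, max_eq_right h, hm₁def, min_eq_left h]
      exact sub_ne_zero.2 hne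
    · rw [hM₁def, max_eq_left h, hm₁def, min_eq_right h]
      exact sub_ne_zero.2 (fun hh => hne hh.symm)
  have hvnz : NZfut v := HNZ m₁ hm₁ M₁ hM₁ min_le_max
  refine ⟨γ s₀, v, ⟨hvne, hvnz⟩, fun s hs => ?_⟩
  set m : ℝ := min s m₁ with hmdef
  set M : ℝ := max s M₁ with hMdef
  have hm : m ∈ I := by
    rcases le_total s m₁ with h | h
    · rw [hmdef, min_eq_left h]; exact hs
    · rw [hmdef, min_eq_right h]; exact hm₁
  have hM : M ∈ I := by
    rcases le_total s M₁ with h | h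
    · rw [hMdef, max_eq_right h]; exact hM₁
    · rw [hMdef, max_eq_left h]; exact hs
  have hmm₁ : m ≤ m₁ := min_le_right _ _
  have hM₁M : M₁ ≤ M := le_max_right _ _
  have hms : m ≤ s := min_le_left _ _
  have hsM : s ≤ M := le_max_left _ _
  have hms₀ : m ≤ s₀ := hmm₁.trans (min_le_left _ _)
  have hs₀M : s₀ ≤ M := (le_max_left s₀ s₁).trans hM₁M
  set B : Mink n := γ M - γ m with hBdef
  have hBnz : NZfut B := HNZ m hm M hM (hms.trans hsM)
  have hBne : B ≠ 0 := by
    intro hB0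
    apply hvne
    refine geom3 (p := γ m₁ - γ m) (r := γ M - γ M₁)
      (HNZ m hm m₁ hm₁ hmm₁) hvnz (HNZ M₁ hM₁ M hM hM₁M) ?_
    rw [hvdef]
    have : γ m₁ - γ m + (γ M₁ - γ m₁) + (γ M - γ M₁) = γ M - γ m := by abel
    rw [this, ← hBdef, hB0]
  have hSRv : SameRay ℝ v B := sameRay_nested HNZ hm hm₁ hM₁ hM hmm₁ min_le_max hM₁M
  obtain ⟨c, hc, hcv⟩ := hSRv.exists_pos_left hvne hBne
  rcases le_total s₀ s with h | h
  · have hSRδ : SameRay ℝ (γ s - γ s₀) B := sameRay_nested HNZ hm hs₀ hs hM hms₀ h hsM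
    obtain ⟨r, hr, hrB⟩ := hSRδ.exists_nonneg_right hBne
    refine ⟨r * c, ?_⟩
    have : γ s - γ s₀ = (r * c) • v := by
      rw [hrB, ← hcv, smul_smul]
    rw [← this]
    abel
  · have hSRδ : SameRay ℝ (γ s₀ - γ s) B := sameRay_nested HNZ hm hs hs₀ hM hms h hs₀M
    obtain ⟨r, hr, hrB⟩ := hSRδ.exists_nonneg_right hBne
    refine ⟨-(r * c), ?_⟩
    have : γ s₀ - γ s = (r * c) • v := by
      rw [hrB, ← hcv, smul_smul]
    have h2 : γ s - γ s₀ = (-(r * c)) • v := by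
      rw [neg_smul, ← this]; abel
    rw [← h2]
    abel
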